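/- The Zak transform of the second Hermite function h₂(t) = 2^{−1/4}(−1 + 4πt²)e^{−πt²} vanishes at the origin: Zh₂(0,0) = Σ_{k∈ℤ} (−1 + 4πk²) e^{−πk²} = 0. -/

import Mathlib

open MeasureTheory Complex
open scoped Real FourierTransform Topology
open Filter Asymptotics

/-- The Zak transform `Zf(x,ω) = Σ_{k∈ℤ} f(k-x) e^{2πiωk}`. -/
noncomputable def Zak (f : ℝ → ℂ) (x ω : ℝ) : ℂ :=
  ∑' k : ℤ, f ((k : ℝ) - x) * Complex.exp (2 * π * Complex.I * ω * (k : ℝ))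

/-- The Wiener space `W₀(ℝ)` of continuous functions with summable sequence of local sup
norms (hence bounded). -/
def MemWienerSpace (f : ℝ → ℂ) : Prop :=
  Continuous f ∧ Summable (fun k : ℤ => ⨆ t : Set.Icc (k : ℝ) ((k : ℝ) + 1), ‖f t‖)

/-- The second Hermite function `h₂(t) = 2^{-1/4}(-1 + 4πt²)e^{-πt²}`. -/
noncomputable def hermite2 (t : ℝ) : ℂ :=
  ((2 ^ (-(1 : ℝ) / 4) * (-1 + 4 * π * t ^ 2) * Real.exp (-(π * t ^ 2)) : ℝ) : ℂ)

noncomputable def gg (n : ℕ) : ℝ → ℂ := fun x => (x : ℂ) ^ n * Complex.exp (-π * (x : ℂ) ^ 2)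

lemma gg_eq (n : ℕ) (x : ℝ) : gg n x = ((x ^ n * Real.exp (-π * x ^ 2) : ℝ) : ℂ) := by
  simp only [gg]
  push_cast [Complex.ofReal_exp]
  ring_nf

lemma integrable_gg (n : ℕ) : Integrable (gg n) := by
  have h := (integrable_rpow_mul_exp_neg_mul_sq Real.pi_pos (s := (n : ℝ))
    ((by norm_num : (-1:ℝ) < 0).trans_le (Nat.cast_nonneg n))).ofReal (𝕜 := ℂ)
  apply h.congr
  filter_upwards with x
  rw [show ((x:ℝ) ^ (n:ℝ)) = x ^ n from Real.rpow_natCast x n]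
  exact (gg_eq n x).symm

lemma Fgg0 : 𝓕 (gg 0) = gg 0 := by
  have h := fourier_gaussian_pi (b := 1) (by norm_num)
  ext w
  have h2 : (fun x : ℝ => cexp (-π * 1 * (x:ℂ) ^ 2)) = gg 0 := by
    ext x; simp [gg]
  rw [h2] at h
  simpa [gg, neg_mul] using congrFun h w

lemma F_const_mul (c : ℂ) (h : ℝ → ℂ) (w : ℝ) :
    𝓕 (fun x => c * h x) w = c * 𝓕 h w := by
  simp_rw [Real.fourier_real_eq_integral_exp_smul, smul_eq_mul, mul_left_comm _ c,
    integral_const_mul]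

lemma hasDerivAt_Fgg (n : ℕ) (w : ℝ) :
    HasDerivAt (𝓕 (gg n)) (-2 * π * I * 𝓕 (gg (n+1)) w) w := by
  have h' : Integrable (fun x : ℝ => x • gg n x) := by
    apply (integrable_gg (n+1)).congr
    filter_upwards with x
    simp [gg, pow_succ, smul_eq_mul]; ring
  have h := Real.hasDerivAt_fourier (integrable_gg n) h' w
  have e : (fun x : ℝ => (-2 * ↑π * I * ↑x) • gg n x)
      = fun x => (-2 * π * I) * gg (n+1) x := by
    ext x; simp [gg, pow_succ, smul_eq_mul]; ring
  rwa [e, F_const_mul] at h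

lemma hasDerivAt_gg0 (w : ℝ) :
    HasDerivAt (gg 0) (-2 * π * w * gg 0 w) w := by
  have h1 : HasDerivAt (fun w : ℝ => (w : ℂ)) 1 w := Complex.ofRealCLM.hasDerivAt
  have h2 := (((h1.mul h1).const_mul (-π : ℂ))).cexp
  have e : (fun w : ℝ => cexp (-π * (w:ℂ) ^ 2)) = gg 0 := by ext x; simp [gg]
  have e2 : (fun w : ℝ => cexp (-π * ((w:ℂ) * (w:ℂ)))) = gg 0 := by
    ext x; simp [gg]; ring_nf
  simp only [Pi.mul_apply] at h2
  rw [e2] at h2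
  convert h2 using 1
  simp [gg]; ring

lemma two_pi_I_ne : (-2 * (π:ℂ) * I) ≠ 0 := by
  simp [Real.pi_ne_zero, Complex.I_ne_zero, Complex.ofReal_ne_zero]

lemma Fgg1 (w : ℝ) : 𝓕 (gg 1) w = -I * w * gg 0 w := by
  have hA := hasDerivAt_Fgg 0 w
  rw [Fgg0] at hA
  have hu := hA.unique (hasDerivAt_gg0 w)
  norm_num at hu
  apply mul_left_cancel₀ two_pi_I_ne
  linear_combination -hu + (-2*(π:ℂ)*w*gg 0 w) * Complex.I_sq

lemma Fgg2 (w : ℝ) : 𝓕 (gg 2) w = (1 - 2 * π * w ^ 2) / (2 * π) * gg 0 w := by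
  have hA := hasDerivAt_Fgg 1 w
  have e : 𝓕 (gg 1) = fun w : ℝ => -I * w * gg 0 w := funext Fgg1
  rw [e] at hA
  have h1 : HasDerivAt (fun w : ℝ => (w : ℂ)) 1 w := Complex.ofRealCLM.hasDerivAt
  have hB := (h1.const_mul (-I)).mul (hasDerivAt_gg0 w)
  have hu := hA.unique hB
  norm_num at hu
  have hπ : ((2:ℂ) * π) ≠ 0 := by simp [Real.pi_ne_zero, Complex.ofReal_ne_zero]
  field_simp
  apply mul_left_cancel₀ two_pi_I_ne
  linear_combination (2*(π:ℂ)) * hu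

noncomputable def ff : ℝ → ℂ := fun x => (((-1 + 4 * π * x ^ 2) * Real.exp (-(π * x ^ 2)) : ℝ) : ℂ)

lemma ff_eq (x : ℝ) : ff x = (-1 : ℂ) * gg 0 x + (4 * π : ℂ) * gg 2 x := by
  simp only [ff, gg]
  push_cast [Complex.ofReal_exp]
  ring_nf

lemma integrable_ff : Integrable ff := by
  have := ((integrable_gg 0).const_mul (-1 : ℂ)).add ((integrable_gg 2).const_mul (4 * π : ℂ))
  apply this.congr
  filter_upwards with x using (ff_eq x).symm

lemma continuous_gg (n : ℕ) : Continuous (gg n) := by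
  unfold gg; fun_prop

lemma continuous_ff : Continuous ff := by
  unfold ff
  apply Complex.continuous_ofReal.comp
  fun_prop

lemma F_add_mul (a b : ℂ) (h₁ h₂ : ℝ → ℂ) (hi₁ : Integrable h₁) (hi₂ : Integrable h₂) (w : ℝ) :
    𝓕 (fun x => a * h₁ x + b * h₂ x) w = a * 𝓕 h₁ w + b * 𝓕 h₂ w := by
  simp_rw [Real.fourier_real_eq_integral_exp_smul, smul_eq_mul, mul_add,
    mul_left_comm _ a, mul_left_comm _ b]
  rw [integral_add, integral_const_mul, integral_const_mul]
  · exact (hi₁.bdd_mul (c := 1) ((Complex.continuous_exp.comp (by continuity)).aestronglyMeasurable)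
      (Filter.Eventually.of_forall fun x => by simp [Complex.norm_exp])).const_mul _
  · exact (hi₂.bdd_mul (c := 1) ((Complex.continuous_exp.comp (by continuity)).aestronglyMeasurable)
      (Filter.Eventually.of_forall fun x => by simp [Complex.norm_exp])).const_mul _

lemma F_ff (w : ℝ) : 𝓕 ff w = -ff w := by
  have e : ff = fun x => (-1 : ℂ) * gg 0 x + (4 * π : ℂ) * gg 2 x := funext ff_eq
  rw [e, F_add_mul _ _ _ _ (integrable_gg 0) (integrable_gg 2), congrFun Fgg0 w, Fgg2]
  have hπ : ((π:ℂ)) ≠ 0 := by simp [Real.pi_ne_zero]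
  have hg : gg 2 w = (w:ℂ)^2 * gg 0 w := by simp [gg]; try ring
  field_simp [hg]
  rw [hg]; ring

lemma ff_isBigO : ff =O[Filter.cocompact ℝ] (fun x => |x| ^ (-2:ℝ)) := by
  have h1 := tendsto_rpow_abs_mul_exp_neg_mul_sq_cocompact Real.pi_pos 2
  have h2 := tendsto_rpow_abs_mul_exp_neg_mul_sq_cocompact Real.pi_pos 4
  have hsum : Tendsto (fun x : ℝ => |x| ^ (2:ℝ) * Real.exp (-π * x ^ 2)
      + 4 * π * (|x| ^ (4:ℝ) * Real.exp (-π * x ^ 2))) (Filter.cocompact ℝ) (𝓝 0) := by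
    have := h1.add (h2.const_mul (4 * π))
    simpa [mul_comm] using this
  have key : Tendsto (fun x : ℝ => ‖ff x‖ * |x| ^ (2:ℝ)) (Filter.cocompact ℝ) (𝓝 0) := by
    apply squeeze_zero' (Filter.Eventually.of_forall fun x => mul_nonneg (norm_nonneg _) (Real.rpow_nonneg (abs_nonneg _) _))
      (Filter.Eventually.of_forall fun x => ?_) hsum
    have hx2 : |x| ^ (2:ℝ) = x ^ 2 := by
      rw [show (2:ℝ) = ((2:ℕ):ℝ) by norm_num, Real.rpow_natCast]
      exact _root_.sq_abs x
    have hx4 : |x| ^ (4:ℝ) = x ^ 4 := by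
      rw [show (4:ℝ) = ((4:ℕ):ℝ) by norm_num, Real.rpow_natCast]
      exact Even.pow_abs ⟨2, rfl⟩ x
    have hn : ‖ff x‖ = |(-1 + 4 * π * x ^ 2)| * Real.exp (-(π * x ^ 2)) := by
      rw [ff, Complex.norm_real, Real.norm_eq_abs, abs_mul, _root_.abs_of_pos (Real.exp_pos _)]
    have habs : |(-1 + 4 * π * x ^ 2)| ≤ 1 + 4 * π * x ^ 2 := by
      have := abs_add_le (-1 : ℝ) (4 * π * x ^ 2)
      have h4 : (0:ℝ) ≤ 4 * π * x ^ 2 := by positivity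
      calc |(-1 + 4 * π * x ^ 2)| ≤ |(-1:ℝ)| + |4 * π * x ^ 2| := this
        _ = 1 + 4 * π * x ^ 2 := by rw [abs_neg, abs_one, _root_.abs_of_nonneg h4]
    rw [hn, hx2, hx4]
    have he : (0:ℝ) < Real.exp (-(π * x ^ 2)) := Real.exp_pos _
    have : ‖ff x‖ * x^2 ≤ (1 + 4 * π * x ^ 2) * Real.exp (-(π * x ^ 2)) * x ^ 2 := by
      rw [hn]
      have := mul_le_mul_of_nonneg_right (mul_le_mul_of_nonneg_right habs he.le)
        (by positivity : (0:ℝ) ≤ x ^ 2)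
      linarith
    calc |(-1 + 4 * π * x^2)| * Real.exp (-(π * x ^ 2)) * x ^ 2
        ≤ (1 + 4 * π * x ^ 2) * Real.exp (-(π * x ^ 2)) * x ^ 2 := by
          have := mul_le_mul_of_nonneg_right (mul_le_mul_of_nonneg_right habs he.le)
            (by positivity : (0:ℝ) ≤ x ^ 2); linarith
      _ = x ^ 2 * Real.exp (-π * x ^ 2) + 4 * π * (x ^ 4 * Real.exp (-π * x ^ 2)) := by
          rw [show -(π * x ^ 2) = -π * x ^ 2 by ring]; ring
  have hne : ∀ᶠ x : ℝ in Filter.cocompact ℝ, x ≠ 0 := by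
    have : ({0}ᶜ : Set ℝ) ∈ Filter.cocompact ℝ :=
      Filter.mem_cocompact.mpr ⟨{0}, isCompact_singleton, le_refl _⟩
    filter_upwards [this] with x hx using hx
  have hlo : (fun x : ℝ => ‖ff x‖) =o[Filter.cocompact ℝ] (fun x => |x| ^ (-2:ℝ)) := by
    rw [Asymptotics.isLittleO_iff_tendsto']
    · apply key.congr'
      filter_upwards [hne] with x hx
      rw [Real.rpow_neg (abs_nonneg x), div_eq_mul_inv, inv_inv]
    · filter_upwards [hne] with x hx h0
      exact absurd h0 (by positivity)
  exact (Asymptotics.isLittleO_norm_left.mp hlo).isBigO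

lemma tsum_ff : (∑' k : ℤ, ff (k : ℝ)) = 0 := by
  have hFf : (𝓕 ff) =O[Filter.cocompact ℝ] (fun x => |x| ^ (-2:ℝ)) := by
    have e : 𝓕 ff = fun w => -ff w := funext F_ff
    rw [e]
    exact ff_isBigO.neg_left
  have hP := Real.tsum_eq_tsum_fourier_of_rpow_decay continuous_ff one_lt_two
    ff_isBigO hFf 0
  simp only [zero_add] at hP
  have hR : (∑' n : ℤ, 𝓕 ff n * fourier n ((0:ℝ) : UnitAddCircle)) = -∑' n : ℤ, ff (n:ℝ) := by
    rw [← tsum_neg]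
    refine tsum_congr fun n => ?_
    rw [F_ff]
    have h0 : ((0:ℝ) : UnitAddCircle) = 0 := by norm_num
    rw [h0, fourier_eval_zero, mul_one]
  rw [hR] at hP
  linear_combination hP / 2


/-- The Zak transform of the second Hermite function vanishes at the origin:
`Zh₂(0,0) = Σ_{k∈ℤ} 2^{-1/4}(-1 + 4πk²) e^{-πk²} = 0`, in particular
`Σ_{k∈ℤ} (-1 + 4πk²) e^{-πk²} = 0`. -/
theorem zak_hermite2_zero_at_origin :
    Zak hermite2 0 0 = 0 ∧
      (∑' k : ℤ, (((-1 + 4 * π * (k : ℝ) ^ 2) * Real.exp (-(π * (k : ℝ) ^ 2)) : ℝ) : ℂ)) = 0 := by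
  have h2 : (∑' k : ℤ, (((-1 + 4 * π * (k : ℝ) ^ 2) * Real.exp (-(π * (k : ℝ) ^ 2)) : ℝ) : ℂ)) = 0 := tsum_ff
  refine ⟨?_, h2⟩
  have he : ∀ k : ℤ, hermite2 ((k : ℝ) - 0) * Complex.exp (2 * π * Complex.I * (0:ℝ) * (k : ℝ))
      = ((2 ^ (-(1 : ℝ) / 4) : ℝ) : ℂ) * ff (k : ℝ) := by
    intro k
    simp only [sub_zero, Complex.ofReal_zero, mul_zero, zero_mul, Complex.exp_zero, mul_one,
      hermite2, ff]
    push_cast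
    ring
  rw [Zak, tsum_congr he, tsum_mul_left, tsum_ff, mul_zero]
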